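/- Let M₀, M₁ be positive semidefinite 2×2 complex matrices with M₀ + M₁ = I. Define the four states ψ_{q,b} for q, b ∈ {0,1} by ψ_{0,0} = |0⟩, ψ_{0,1} = |1⟩, ψ_{1,0} = (|0⟩+|1⟩)/√2, ψ_{1,1} = (|0⟩−|1⟩)/√2. Then (1/4)·Σ_{q,b} ⟨ψ_{q,b}| M_b |ψ_{q,b}⟩ ≤ cos²(π/8). -/

import Mathlib

open Matrix ComplexOrder

lemma le_of_sq_le_sq' (t s : ℝ) (hs : 0 ≤ s) (h : t ^ 2 ≤ s ^ 2) : t ≤ s := by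
  calc t ≤ |t| := le_abs_self t
  _ = Real.sqrt (t ^ 2) := (Real.sqrt_sq_eq_abs t).symm
  _ ≤ Real.sqrt (s ^ 2) := Real.sqrt_le_sqrt h
  _ = |s| := Real.sqrt_sq_eq_abs s
  _ = s := abs_of_nonneg hs

lemma key_ineq (a d r : ℝ) (ha0 : 0 ≤ a) (ha1 : a ≤ 1) (hd0 : 0 ≤ d) (hd1 : d ≤ 1)
    (h1 : r ^ 2 ≤ a * d) (h2 : r ^ 2 ≤ (1 - a) * (1 - d)) :
    a - d + 2 * r ≤ Real.sqrt 2 := by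
  set p := Real.sqrt (a * d) with hpdef
  set q := Real.sqrt ((1 - a) * (1 - d)) with hqdef
  have hp0 : 0 ≤ p := Real.sqrt_nonneg _
  have hq0 : 0 ≤ q := Real.sqrt_nonneg _
  have hp : p ^ 2 = a * d := Real.sq_sqrt (by nlinarith)
  have hq : q ^ 2 = (1 - a) * (1 - d) := Real.sq_sqrt (by nlinarith)
  have hrp : r ≤ p := by
    calc r ≤ |r| := le_abs_self r
    _ = Real.sqrt (r ^ 2) := (Real.sqrt_sq_eq_abs r).symm
    _ ≤ p := Real.sqrt_le_sqrt h1
  have hrq : r ≤ q := by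
    calc r ≤ |r| := le_abs_self r
    _ = Real.sqrt (r ^ 2) := (Real.sqrt_sq_eq_abs r).symm
    _ ≤ q := Real.sqrt_le_sqrt h2
  have hpq2 : (p * q) ^ 2 = (a * (1 - a)) * (d * (1 - d)) := by
    rw [mul_pow, hp, hq]; ring
  have h2pq : 2 * (p * q) ≤ a * (1 - a) + d * (1 - d) := by
    apply le_of_sq_le_sq'
    · nlinarith [mul_nonneg ha0 (by linarith : (0:ℝ) ≤ 1 - a),
        mul_nonneg hd0 (by linarith : (0:ℝ) ≤ 1 - d)]
    · nlinarith [sq_nonneg (a * (1 - a) - d * (1 - d))]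
  have hsum1 : (a - d) ^ 2 + (p + q) ^ 2 ≤ 1 := by nlinarith [hp, hq, h2pq]
  have hs2 : (Real.sqrt 2) ^ 2 = 2 := Real.sq_sqrt (by norm_num)
  have hs20 : 0 ≤ Real.sqrt 2 := Real.sqrt_nonneg 2
  have ht : a - d + (p + q) ≤ Real.sqrt 2 := by
    apply le_of_sq_le_sq' _ _ hs20
    rw [hs2]
    nlinarith [sq_nonneg (a - d - (p + q))]
  linarith

/-- The four BB84 states `H^q |b⟩` as vectors in `ℂ²`. -/
noncomputable def bb84 (q b : Fin 2) : Fin 2 → ℂ :=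
  if q = 0 then
    (if b = 0 then ![1, 0] else ![0, 1])
  else
    (if b = 0 then ![(((Real.sqrt 2)⁻¹ : ℝ) : ℂ), (((Real.sqrt 2)⁻¹ : ℝ) : ℂ)]
     else ![(((Real.sqrt 2)⁻¹ : ℝ) : ℂ), -(((Real.sqrt 2)⁻¹ : ℝ) : ℂ)])

theorem stmt_13 (M : Fin 2 → Matrix (Fin 2) (Fin 2) ℂ)
    (hM0 : (M 0).PosSemidef) (hM1 : (M 1).PosSemidef)
    (hsum : M 0 + M 1 = 1) :
    (1 / 4) * ∑ q : Fin 2, ∑ b : Fin 2,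
        (star (bb84 q b) ⬝ᵥ (M b).mulVec (bb84 q b)).re
      ≤ Real.cos (Real.pi / 8) ^ 2 := by
  have hM1e : M 1 = 1 - M 0 := by rw [← hsum]; abel
  set a : ℝ := ((M 0) 0 0).re with ha
  set d : ℝ := ((M 0) 1 1).re with hd
  set r : ℝ := ((M 0) 0 1).re with hr
  have h10 : (M 0) 1 0 = starRingEnd ℂ ((M 0) 0 1) := (hM0.1.apply 1 0).symm
  have him00 : ((M 0) 0 0).im = 0 := Complex.conj_eq_iff_im.mp (hM0.1.apply 0 0)
  have him11 : ((M 0) 1 1).im = 0 := Complex.conj_eq_iff_im.mp (hM0.1.apply 1 1)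
  have hq0 : ∀ t : ℝ, 0 ≤ a * (t * t) + (2 * r) * t + d := by
    intro t
    have h := hM0.dotProduct_mulVec_nonneg ![(t : ℂ), 1]
    rw [Complex.le_def] at h
    have h' := h.1
    simp [dotProduct, mulVec, Fin.sum_univ_two, h10, Complex.add_re, Complex.mul_re] at h'
    nlinarith [h']
  have hq1 : ∀ t : ℝ, 0 ≤ (1 - a) * (t * t) + (-(2 * r)) * t + (1 - d) := by
    intro t
    have h := hM1.dotProduct_mulVec_nonneg ![(t : ℂ), 1]
    rw [Complex.le_def] at h
    have h' := h.1
    simp [hM1e, dotProduct, mulVec, Fin.sum_univ_two, h10, Matrix.sub_apply, one_apply,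
      Complex.add_re, Complex.sub_re, Complex.mul_re] at h'
    nlinarith [h']
  have ha0 : 0 ≤ a := by
    have h := hM0.dotProduct_mulVec_nonneg ![1, 0]
    rw [Complex.le_def] at h
    have h' := h.1
    simpa [dotProduct, mulVec, Fin.sum_univ_two] using h'
  have hd0 : 0 ≤ d := by
    have h := hM0.dotProduct_mulVec_nonneg ![0, 1]
    rw [Complex.le_def] at h
    have h' := h.1
    simpa [dotProduct, mulVec, Fin.sum_univ_two] using h'
  have ha1 : a ≤ 1 := by
    have h := hM1.dotProduct_mulVec_nonneg ![1, 0]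
    rw [Complex.le_def] at h
    have h' := h.1
    simp [hM1e, dotProduct, mulVec, Fin.sum_univ_two, Matrix.sub_apply, one_apply] at h'
    linarith
  have hd1 : d ≤ 1 := by
    have h := hM1.dotProduct_mulVec_nonneg ![0, 1]
    rw [Complex.le_def] at h
    have h' := h.1
    simp [hM1e, dotProduct, mulVec, Fin.sum_univ_two, Matrix.sub_apply, one_apply] at h'
    linarith
  have hdisc0 : (2 * r) ^ 2 - 4 * a * d ≤ 0 := by
    have := discrim_le_zero hq0
    simpa [discrim] using this
  have hdisc1 : (-(2 * r)) ^ 2 - 4 * (1 - a) * (1 - d) ≤ 0 := by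
    have := discrim_le_zero hq1
    simpa [discrim] using this
  have hkey := key_ineq a d r ha0 ha1 hd0 hd1 (by nlinarith) (by nlinarith)
  have hs2 : Real.sqrt 2 * Real.sqrt 2 = 2 := Real.mul_self_sqrt (by norm_num)
  have hS : ∑ q : Fin 2, ∑ b : Fin 2,
        (star (bb84 q b) ⬝ᵥ (M b).mulVec (bb84 q b)).re = 2 + (a - d) + 2 * r := by
    simp [bb84, Fin.sum_univ_two, dotProduct, mulVec, hM1e, Matrix.sub_apply, one_apply, h10,
      Complex.add_re, Complex.sub_re, Complex.mul_re, him00, him11]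
    field_simp
    ring_nf
    rw [show Real.sqrt 2 ^ 2 = 2 from Real.sq_sqrt (by norm_num)]
    ring
  rw [hS]
  have hcos : Real.cos (Real.pi / 8) ^ 2 = 1 / 2 + Real.sqrt 2 / 4 := by
    rw [Real.cos_sq (Real.pi / 8),
      show (2 : ℝ) * (Real.pi / 8) = Real.pi / 4 by ring, Real.cos_pi_div_four]
    ring
  rw [hcos]
  linarith [hkey]
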